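/- Let Z_i(δ_i) = ⟨c_i, G_i diag(δ_i)⟩ ⊂ ℝ^d be scaled zonotopes with c_i ∈ ℝ^d, G_i ∈ ℝ^{d×D_i}, and δ_i ∈ ℝ^{D_i} with δ_i ≥ 0 componentwise, for i = 1, …, n with n ≥ 2. Set D̄ = 1 + Σ_{i=1}^{n−1} D_i and V = [I_{D̄} −I_{D̄}]. If there exists Φ ∈ ℝ^{2D̄×D_n} with Φ ≥ 0 entrywise, Φᵀ 1_{2D̄} ≤ δ_n componentwise, and G_n Φᵀ Vᵀ = [ (Σ_{i=1}^{n−1} c_i − c_n) G_1 diag(δ_1) ⋯ G_{n−1} diag(δ_{n−1}) ], then Z_1(δ_1) ⊕ ⋯ ⊕ Z_{n−1}(δ_{n−1}) ⊆ Z_n(δ_n). -/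

import Mathlib

open Matrix Pointwise BigOperators

/-- The zonotope `⟨c, G⟩ = {c + Gξ : ‖ξ‖_∞ ≤ 1}` (sup norm on the Pi type). -/
def zonotope {d D : Type*} [Fintype d] [Fintype D]
    (c : d → ℝ) (G : Matrix d D ℝ) : Set (d → ℝ) :=
  {x | ∃ ξ : D → ℝ, ‖ξ‖ ≤ 1 ∧ x = c + G.mulVec ξ}

/-- Minkowski sum of a finite family of sets. -/
def minkSum {d : Type*} {ι : Type*} [Fintype ι] [AddCommMonoid d]
    (Z : ι → Set d) : Set d :=
  {x | ∃ p : ι → d, (∀ i, p i ∈ Z i) ∧ x = ∑ i, p i}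

/-- Corollary 3 (scaled zonotope containment): if there is an entrywise-nonnegative
`Φ ∈ ℝ^{2D̄×Dₙ}` with `Φᵀ 1 ≤ δₙ` and
`Gₙ Φᵀ Vᵀ = [ (∑ cᵢ − cₙ)  G₁ diag(δ₁) ⋯ G_{n−1} diag(δ_{n−1}) ]`, then
`Z₁(δ₁) ⊕ ⋯ ⊕ Z_{n−1}(δ_{n−1}) ⊆ Zₙ(δₙ)`.  The `D̄ = 1 + ∑ Dᵢ` columns are indexed
by `Unit ⊕ (Σ i, Fin (Di i))` and `V = [I −I]` is `Matrix.fromColumns 1 (-1)`. -/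
theorem scaled_zonotope_inclusion
    {v m : ℕ} (hm : 1 ≤ m)  -- `m = n - 1`, so `n ≥ 2`
    {Dn : ℕ} {Di : Fin m → ℕ}
    (c : ∀ _ : Fin m, Fin v → ℝ) (G : ∀ i : Fin m, Matrix (Fin v) (Fin (Di i)) ℝ)
    (δ : ∀ i : Fin m, Fin (Di i) → ℝ) (hδ : ∀ i k, 0 ≤ δ i k)
    (cn : Fin v → ℝ) (Gn : Matrix (Fin v) (Fin Dn) ℝ)
    (δn : Fin Dn → ℝ) (hδn : ∀ j, 0 ≤ δn j)
    (Φ : Matrix ((Unit ⊕ (Σ i : Fin m, Fin (Di i))) ⊕ (Unit ⊕ (Σ i : Fin m, Fin (Di i))))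
        (Fin Dn) ℝ)
    (hΦpos : ∀ r j, 0 ≤ Φ r j)
    (hΦsum : ∀ j, ∑ r, Φ r j ≤ δn j)
    (hΦeq : Gn * (Φᵀ * (Matrix.fromCols (1 : Matrix (Unit ⊕ (Σ i : Fin m, Fin (Di i)))
        (Unit ⊕ (Σ i : Fin m, Fin (Di i))) ℝ) (-1))ᵀ : Matrix (Fin Dn) (Unit ⊕ (Σ i : Fin m, Fin (Di i))) ℝ)
      = Matrix.of fun r j =>
          Sum.elim (fun _ : Unit => (∑ i, c i r) - cn r)
            (fun ik => (G ik.1 * Matrix.diagonal (δ ik.1)) r ik.2) j) :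
    minkSum (fun i => zonotope (c i) (G i * Matrix.diagonal (δ i)))
      ⊆ zonotope cn (Gn * Matrix.diagonal δn) := by

  intro x hx
  obtain ⟨p, hp, hpx⟩ := hx
  choose ξ hξ hpξ using hp
  set η : (Unit ⊕ (Σ i : Fin m, Fin (Di i))) → ℝ :=
    Sum.elim (fun _ => 1) (fun ik => ξ ik.1 ik.2) with hη
  have hηb : ∀ s, |η s| ≤ 1 := by
    rintro (s | ⟨i, k⟩)
    · simp [hη]
    · have := (norm_le_pi_norm (ξ i) k).trans (hξ i)
      simpa [hη] using this
  set w : ((Unit ⊕ (Σ i : Fin m, Fin (Di i))) ⊕ (Unit ⊕ (Σ i : Fin m, Fin (Di i)))) → ℝ :=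
    Sum.elim η (-η) with hw
  have hwb : ∀ r, |w r| ≤ 1 := by
    rintro (r | r)
    · simpa [hw] using hηb r
    · simpa [hw, abs_neg] using hηb r
  set ζ : Fin Dn → ℝ := Φᵀ.mulVec w with hζ
  have hζb : ∀ j, |ζ j| ≤ δn j := by
    intro j
    calc |ζ j| = |∑ r, Φ r j * w r| := by
          simp [hζ, Matrix.mulVec, dotProduct, Matrix.transpose_apply]
      _ ≤ ∑ r, |Φ r j * w r| := Finset.abs_sum_le_sum_abs _ _
      _ ≤ ∑ r, Φ r j := by
          refine Finset.sum_le_sum fun r _ => ?_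
          rw [abs_mul, abs_of_nonneg (hΦpos r j)]
          calc Φ r j * |w r| ≤ Φ r j * 1 :=
                mul_le_mul_of_nonneg_left (hwb r) (hΦpos r j)
            _ = Φ r j := mul_one _
      _ ≤ δn j := hΦsum j
  refine ⟨fun j => if δn j = 0 then 0 else ζ j / δn j, ?_, ?_⟩
  · rw [pi_norm_le_iff_of_nonneg zero_le_one]
    intro j
    by_cases h : δn j = 0
    · simp [h]
    · have hpos : 0 < δn j := lt_of_le_of_ne (hδn j) (Ne.symm h)
      simp only [h, if_false, Real.norm_eq_abs]
      rw [abs_div, abs_of_nonneg (hδn j), div_le_one hpos]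
      exact hζb j
  · have hdiag : (Matrix.diagonal δn).mulVec (fun j => if δn j = 0 then 0 else ζ j / δn j) = ζ := by
      funext j
      rw [Matrix.mulVec_diagonal]
      by_cases h : δn j = 0
      · have hz : ζ j = 0 := by
          have := hζb j; rw [h] at this
          exact abs_nonpos_iff.mp this
        simp [h, hz]
      · rw [if_neg h, mul_comm]; exact div_mul_cancel₀ _ h
    have hVw : ((Matrix.fromCols (1 : Matrix (Unit ⊕ (Σ i : Fin m, Fin (Di i)))
        (Unit ⊕ (Σ i : Fin m, Fin (Di i))) ℝ) (-1))ᵀ).mulVec η = w := by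
      rw [Matrix.transpose_fromCols, Matrix.fromRows_mulVec]
      simp [hw, Matrix.one_mulVec, Matrix.neg_mulVec]
    have key : (Gn * Matrix.diagonal δn).mulVec
        (fun j => if δn j = 0 then 0 else ζ j / δn j) =
        (Matrix.of fun r j =>
          Sum.elim (fun _ : Unit => (∑ i, c i r) - cn r)
            (fun ik => (G ik.1 * Matrix.diagonal (δ ik.1)) r ik.2) j).mulVec η := by
      rw [← Matrix.mulVec_mulVec, hdiag, hζ, ← hVw, Matrix.mulVec_mulVec,
        Matrix.mulVec_mulVec, Matrix.mul_assoc]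
      exact congrArg (fun M => M *ᵥ η) hΦeq
    rw [key, hpx]
    funext r
    simp only [Matrix.mulVec, dotProduct, Matrix.of_apply, Pi.add_apply,
      Finset.sum_apply, Fintype.sum_sum_type]
    have hps : ∀ i, p i = c i + (G i * Matrix.diagonal (δ i)).mulVec (ξ i) := hpξ
    have : ∑ i, p i r = ∑ i, (c i r + ((G i * Matrix.diagonal (δ i)).mulVec (ξ i)) r) := by
      refine Finset.sum_congr rfl fun i _ => ?_
      rw [hps i]; rfl
    rw [this, Finset.sum_add_distrib]
    simp only [Matrix.mulVec, dotProduct]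
    rw [Finset.sum_sigma']
    simp [hη, Finset.univ_sigma_univ]
    ring
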